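/- If T is quasimonotone, then T^ν is the union of all maximal quasimonotone extensions of T, T^{νν} is their intersection, and T is maximal quasimonotone if and only if T = T^ν. -/

import Mathlib

open NormedSpace

variable {X : Type*} [NormedAddCommGroup X] [NormedSpace ℝ X]

/-- quasimonotone relation: (x,x*) ∼q (y,y*) iff min{⟨y−x,x*⟩, ⟨x−y,y*⟩} ≤ 0 -/
def qrel (p q : X × StrongDual ℝ X) : Prop :=
  min (p.2 (q.1 - p.1)) (q.2 (p.1 - q.1)) ≤ 0

/-- quasimonotone polar -/
def qpolar (T : Set (X × StrongDual ℝ X)) : Set (X × StrongDual ℝ X) :=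
  {p | ∀ q ∈ T, qrel p q}

/-- imagewise conic hull of an operator -/
def coneOp (T : Set (X × StrongDual ℝ X)) : Set (X × StrongDual ℝ X) :=
  {p | ∃ t : ℝ, 0 ≤ t ∧ ∃ v, (p.1, v) ∈ T ∧ p.2 = t • v}

def QuasiMono (T : Set (X × StrongDual ℝ X)) : Prop := ∀ p ∈ T, ∀ q ∈ T, qrel p q

def MaxQuasiMono (T : Set (X × StrongDual ℝ X)) : Prop :=
  QuasiMono T ∧ ∀ S, QuasiMono S → T ⊆ S → S = T

def Vset (T : Set (X × StrongDual ℝ X)) (x : X) : Set X :=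
  {y | ∃ y' : StrongDual ℝ X, (y, y') ∈ T ∧ 0 < y' (x - y)}

/-- the image T^ν(x) of the quasimonotone polar -/
def polarIm (T : Set (X × StrongDual ℝ X)) (x : X) : Set (StrongDual ℝ X) :=
  {x' | (x, x') ∈ qpolar T}

/-- normal cone of C at x (no convexity or membership assumed) -/
def normalCone (C : Set X) (x : X) : Set (StrongDual ℝ X) :=
  {x' | ∀ y ∈ C, x' (y - x) ≤ 0}

def im (T : Set (X × StrongDual ℝ X)) (x : X) : Set (StrongDual ℝ X) := {v | (x, v) ∈ T}

/-- effective domain: T(u) nonempty and ≠ {0} -/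
def edom (T : Set (X × StrongDual ℝ X)) : Set X :=
  {u | (im T u).Nonempty ∧ im T u ≠ {0}}

/-- conic hull of a set in the dual -/
def coneSet (A : Set (StrongDual ℝ X)) : Set (StrongDual ℝ X) :=
  {v | ∃ t : ℝ, 0 ≤ t ∧ ∃ a ∈ A, v = t • a}

def Eset (T : Set (X × StrongDual ℝ X)) : Set X := {x | Vset T x = ∅}

/-- solution set of the Minty variational inequality for S on K -/
def Minty (S : Set (X × StrongDual ℝ X)) (K : Set X) : Set X :=
  {x ∈ K | ∀ q ∈ S, q.1 ∈ K → q.2 (x - q.1) ≤ 0}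

def AEMaxQuasiMono (T : Set (X × StrongDual ℝ X)) : Prop :=
  QuasiMono T ∧ ∀ S, QuasiMono S → (∀ x ∈ edom T, im T x ⊆ coneSet (im S x)) →
    (∀ x ∈ edom T, coneSet (im T x) = coneSet (im S x)) ∧ edom T = edom S

lemma qrel_symm {p q : X × StrongDual ℝ X} (h : qrel p q) : qrel q p := by
  unfold qrel at *; rw [min_comm]; exact h

lemma qrel_refl (p : X × StrongDual ℝ X) : qrel p p := by
  simp [qrel]

lemma qpolar_anti {A B : Set (X × StrongDual ℝ X)} (h : A ⊆ B) : qpolar B ⊆ qpolar A :=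
  fun _ hp q hq => hp q (h hq)

lemma qm_subset_qpolar {A : Set (X × StrongDual ℝ X)} (h : QuasiMono A) : A ⊆ qpolar A :=
  fun p hp q hq => h p hp q hq

lemma qm_insert {A : Set (X × StrongDual ℝ X)} (hA : QuasiMono A) {p : X × StrongDual ℝ X}
    (hp : p ∈ qpolar A) : QuasiMono (insert p A) := by
  intro a ha b hb
  rcases ha with rfl | ha <;> rcases hb with rfl | hb
  · exact qrel_refl _
  · exact hp b hb
  · exact qrel_symm (hp a ha)
  · exact hA a ha b hb

lemma exists_max_ext (A : Set (X × StrongDual ℝ X)) (hA : QuasiMono A) :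
    ∃ M, MaxQuasiMono M ∧ A ⊆ M := by
  obtain ⟨M, hAM, hM⟩ := zorn_subset_nonempty {S : Set (X × StrongDual ℝ X) | QuasiMono S ∧ A ⊆ S}
    (fun c hc hchain hne => by
      refine ⟨⋃₀ c, ⟨?_, ?_⟩, fun s hs => Set.subset_sUnion_of_mem hs⟩
      · intro p hp q hq
        obtain ⟨S, hS, hpS⟩ := hp
        obtain ⟨S', hS', hqS'⟩ := hq
        rcases hchain.total hS hS' with h | h
        · exact (hc hS').1 p (h hpS) q hqS'
        · exact (hc hS).1 p hpS q (h hqS')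
      · obtain ⟨S, hS⟩ := hne
        exact (hc hS).2.trans (Set.subset_sUnion_of_mem hS)) A ⟨hA, subset_rfl⟩
  refine ⟨M, ⟨hM.prop.1, fun S hS hMS => ?_⟩, hM.prop.2⟩
  exact subset_antisymm (hM.le_of_ge ⟨hS, hM.prop.2.trans hMS⟩ hMS) hMS

theorem stmt14 [CompleteSpace X] (T : Set (X × StrongDual ℝ X)) (hT : QuasiMono T) :
    qpolar T = ⋃₀ {M | MaxQuasiMono M ∧ T ⊆ M} ∧
    qpolar (qpolar T) = ⋂₀ {M | MaxQuasiMono M ∧ T ⊆ M} ∧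
    (MaxQuasiMono T ↔ T = qpolar T) := by
  have part1 : qpolar T = ⋃₀ {M | MaxQuasiMono M ∧ T ⊆ M} := by
    apply subset_antisymm
    · intro p hp
      have hins : QuasiMono (insert p T) := qm_insert hT hp
      obtain ⟨M, hM, hsub⟩ := exists_max_ext _ hins
      exact ⟨M, ⟨hM, (Set.subset_insert p T).trans hsub⟩, hsub (Set.mem_insert p T)⟩
    · rintro p ⟨M, ⟨hM, hTM⟩, hpM⟩
      exact fun q hq => hM.1 p hpM q (hTM hq)
  refine ⟨part1, ?_, ?_⟩
  · apply subset_antisymm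
    · intro p hp
      rintro M ⟨hM, hTM⟩
      have hMpol : M ⊆ qpolar T := (qm_subset_qpolar hM.1).trans (qpolar_anti hTM)
      have hpM : p ∈ qpolar M := fun q hq => hp q (hMpol hq)
      have := hM.2 (insert p M) (qm_insert hM.1 hpM) (Set.subset_insert p M)
      rw [← this]; exact Set.mem_insert p M
    · intro p hp q hq
      rw [part1] at hq
      obtain ⟨M, hM, hqM⟩ := hq
      have hpM : p ∈ M := hp M hM
      exact hM.1.1 p hpM q hqM
  · constructor
    · intro hmax
      apply subset_antisymm (qm_subset_qpolar hT)
      intro p hp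
      have := hmax.2 (insert p T) (qm_insert hT hp) (Set.subset_insert p T)
      rw [← this]; exact Set.mem_insert p T
    · intro heq
      refine ⟨hT, fun S hS hTS => subset_antisymm ?_ hTS⟩
      calc S ⊆ qpolar S := qm_subset_qpolar hS
        _ ⊆ qpolar T := qpolar_anti hTS
        _ = T := heq.symm
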